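/- The minimal polynomial of β over ℚ is f(x) = x⁴ + 2Dx² + (D² − DB²). In particular f is irreducible over ℚ and [F : ℚ] = 4. -/
import Mathlib


open IntermediateField

noncomputable section

open Polynomial in
lemma quartic_natDegree {R : Type*} [CommRing R] [Nontrivial R] (a b : R) :
    (X ^ 4 + C a * X ^ 2 + C b).natDegree = 4 := by
  compute_degree!

open Polynomial in
lemma quartic_monic {R : Type*} [CommRing R] [Nontrivial R] (a b : R) :
    (X ^ 4 + C a * X ^ 2 + C b).Monic := by
  rw [Polynomial.Monic, Polynomial.leadingCoeff, quartic_natDegree]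
  simp [coeff_add, coeff_X_pow, coeff_C]

open Polynomial in
lemma quartic_coeffs {R : Type*} [CommRing R] (a b : R) :
    (X ^ 4 + C a * X ^ 2 + C b).coeff 0 = b ∧
    (X ^ 4 + C a * X ^ 2 + C b).coeff 1 = 0 ∧
    (X ^ 4 + C a * X ^ 2 + C b).coeff 2 = a ∧
    (X ^ 4 + C a * X ^ 2 + C b).coeff 3 = 0 := by
  refine ⟨?_, ?_, ?_, ?_⟩ <;> simp [coeff_add, coeff_X_pow, coeff_C]

/-- Let `B, C, D` be positive integers with `D = B² + C²` squarefree, and let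
`β = i·√(D + B√D) ∈ ℂ`. Then the minimal polynomial of `β` over `ℚ` is
`f(x) = x⁴ + 2Dx² + (D² − DB²)`; in particular `f` is irreducible over `ℚ` and
`[ℚ(β) : ℚ] = 4`. -/
theorem statement3 (B C D : ℕ) (hB : 0 < B) (hC : 0 < C) (hD : D = B ^ 2 + C ^ 2)
    (hsf : Squarefree D)
    (β : ℂ)
    (hβ : β = Complex.I * ((Real.sqrt ((D : ℝ) + (B : ℝ) * Real.sqrt (D : ℝ)) : ℝ) : ℂ)) :
    minpoly ℚ β =
      Polynomial.X ^ 4 + Polynomial.C (2 * (D : ℚ)) * Polynomial.X ^ 2 +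
        Polynomial.C ((D : ℚ) ^ 2 - (D : ℚ) * (B : ℚ) ^ 2) ∧
    Irreducible
      (Polynomial.X ^ 4 + Polynomial.C (2 * (D : ℚ)) * Polynomial.X ^ 2 +
        Polynomial.C ((D : ℚ) ^ 2 - (D : ℚ) * (B : ℚ) ^ 2)) ∧
    Module.finrank ℚ ℚ⟮β⟯ = 4 := by
  set f : Polynomial ℚ :=
    Polynomial.X ^ 4 + Polynomial.C (2 * (D : ℚ)) * Polynomial.X ^ 2 +
      Polynomial.C ((D : ℚ) ^ 2 - (D : ℚ) * (B : ℚ) ^ 2) with hf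
  set g : Polynomial ℤ :=
    Polynomial.X ^ 4 + Polynomial.C (2 * (D : ℤ)) * Polynomial.X ^ 2 +
      Polynomial.C ((D : ℤ) * (C : ℤ) ^ 2) with hg
  have hDQ : (D : ℚ) = (B : ℚ) ^ 2 + (C : ℚ) ^ 2 := by exact_mod_cast hD
  -- f is the image of g
  have hmap : f = g.map (Int.castRingHom ℚ) := by
    rw [hf, hg]
    have e1 : (Int.castRingHom ℚ) (2 * (D : ℤ)) = 2 * (D : ℚ) := by
      rw [eq_intCast]; push_cast; ring
    have e2 : (Int.castRingHom ℚ) ((D : ℤ) * (C : ℤ) ^ 2)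
        = (D : ℚ) ^ 2 - (D : ℚ) * (B : ℚ) ^ 2 := by
      rw [eq_intCast]; push_cast; linear_combination (-(D : ℚ)) * hDQ
    simp only [Polynomial.map_add, Polynomial.map_mul, Polynomial.map_pow, Polynomial.map_X,
      Polynomial.map_C, e1, e2]
  -- a prime dividing D
  have hD2 : 2 ≤ D := by
    have h1 : 1 ≤ B ^ 2 := Nat.one_le_pow _ _ hB
    have h2 : 1 ≤ C ^ 2 := Nat.one_le_pow _ _ hC
    omega
  obtain ⟨p, hp, hpd⟩ := Nat.exists_prime_and_dvd (show D ≠ 1 by omega)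
  have hpC : ¬ p ∣ C := by
    intro hpc
    have h1 : p ∣ C ^ 2 := dvd_pow hpc two_ne_zero
    have h2 : p ∣ B ^ 2 := by
      have h3 : p ∣ B ^ 2 + C ^ 2 := hD ▸ hpd
      have h4 : p ∣ B ^ 2 + C ^ 2 - C ^ 2 := Nat.dvd_sub h3 h1
      simpa using h4
    have hpB : p ∣ B := hp.dvd_of_dvd_pow h2
    have hsq : p * p ∣ D := by
      rw [hD]
      have : p * p ∣ B ^ 2 := by
        have := mul_dvd_mul hpB hpB
        simpa [pow_two] using this
      have h5 : p * p ∣ C ^ 2 := by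
        have := mul_dvd_mul hpc hpc
        simpa [pow_two] using this
      exact dvd_add this h5
    exact hp.not_isUnit (hsf p hsq)
  have hp2D : ¬ p ^ 2 ∣ D := by
    intro h
    exact hp.not_isUnit (hsf p (by simpa [pow_two] using h))
  -- Eisenstein over ℤ
  have hgmonic : g.Monic := quartic_monic _ _
  have hgdeg : g.degree = 4 := by
    rw [Polynomial.degree_eq_natDegree hgmonic.ne_zero, quartic_natDegree]; rfl
  obtain ⟨gc0, gc1, gc2, gc3⟩ := quartic_coeffs (2 * (D : ℤ)) ((D : ℤ) * (C : ℤ) ^ 2)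
  have hppI : Prime (p : ℤ) := Nat.prime_iff_prime_int.mp hp
  have hgirr : Irreducible g := by
    apply Polynomial.irreducible_of_eisenstein_criterion
      (P := Ideal.span {(p : ℤ)})
      ((Ideal.span_singleton_prime (by exact_mod_cast hp.ne_zero)).mpr hppI)
    · rw [hgmonic.leadingCoeff, Ideal.mem_span_singleton]
      exact fun h => hppI.not_isUnit (isUnit_of_dvd_one h)
    · intro n hn
      rw [hgdeg] at hn
      have hn4 : n < 4 := by exact_mod_cast hn
      interval_cases n
      · rw [gc0, Ideal.mem_span_singleton]
        exact Dvd.dvd.mul_right (by exact_mod_cast hpd) _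
      · rw [gc1]; exact Ideal.zero_mem _
      · rw [gc2, Ideal.mem_span_singleton]
        exact Dvd.dvd.mul_left (by exact_mod_cast hpd) 2
      · rw [gc3]; exact Ideal.zero_mem _
    · rw [hgdeg]; norm_num
    · rw [gc0, Ideal.span_singleton_pow, Ideal.mem_span_singleton]
      intro h
      have hcop : Nat.Coprime (p ^ 2) (C ^ 2) :=
        Nat.Coprime.pow 2 2 (hp.coprime_iff_not_dvd.mpr hpC)
      have hdvd : (p : ℤ) ^ 2 ∣ (D : ℤ) * (C : ℤ) ^ 2 := h
      have hdvdN : p ^ 2 ∣ D * C ^ 2 := by exact_mod_cast hdvd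
      exact hp2D (hcop.dvd_of_dvd_mul_right hdvdN)
    · exact hgmonic.isPrimitive
  have hfirr : Irreducible f := by
    rw [hmap]
    exact (Polynomial.IsPrimitive.Int.irreducible_iff_irreducible_map_cast
      hgmonic.isPrimitive).mp hgirr
  have hfmonic : f.Monic := quartic_monic _ _
  -- β is a root of f
  have hDnn : (0 : ℝ) ≤ (D : ℝ) := by positivity
  have hs : Real.sqrt (D : ℝ) ^ 2 = (D : ℝ) := Real.sq_sqrt hDnn
  have ha : Real.sqrt ((D : ℝ) + (B : ℝ) * Real.sqrt (D : ℝ)) ^ 2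
      = (D : ℝ) + (B : ℝ) * Real.sqrt (D : ℝ) :=
    Real.sq_sqrt (by positivity)
  have hs' : ((Real.sqrt (D : ℝ) : ℝ) : ℂ) ^ 2 = (D : ℂ) := by
    rw [← Complex.ofReal_pow, hs]; push_cast; ring
  have hkey : β ^ 2 = -((D : ℂ) + (B : ℂ) * ((Real.sqrt (D : ℝ) : ℝ) : ℂ)) := by
    rw [hβ, mul_pow, Complex.I_sq, ← Complex.ofReal_pow, ha]
    push_cast
    ring
  have haeval : Polynomial.aeval β f = 0 := by
    rw [hf]
    simp only [map_add, map_mul, map_pow, Polynomial.aeval_X, Polynomial.aeval_C, eq_ratCast]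
    rw [show β ^ 4 = (β ^ 2) ^ 2 by ring, hkey]
    push_cast
    linear_combination (B : ℂ) ^ 2 * hs'
  have hmin : minpoly ℚ β = f :=
    (minpoly.eq_of_irreducible_of_monic hfirr haeval hfmonic).symm
  refine ⟨hmin, hfirr, ?_⟩
  have hint : IsIntegral ℚ β := ⟨f, hfmonic, haeval⟩
  rw [IntermediateField.adjoin.finrank hint, hmin, hf, quartic_natDegree]
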